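/- Let ξ and η be U-bounded vectors with constants k_ξ and k_η respectively. Then for every φ ∈ L²(G): (i) for every x ∈ G the function y ↦ φ(y)·c_{ξη}(y⁻¹x) is integrable on G, and the convolution (φ ⋆ c_{ξη})(x) := ∫ φ(y) c_{ξη}(y⁻¹x) dy satisfies |（φ ⋆ c_{ξη})(x)| ≤ ‖φ‖₂·‖c_{ηξ}‖₂ for all x; (ii) φ ⋆ c_{ξη} is continuous on G and vanishes at infinity; (iii) φ ⋆ c_{ξη} lies in L²(G) with ‖φ ⋆ c_{ξη}‖₂ ≤ k_ξ k_η ‖φ‖₂. -/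

import Mathlib

open MeasureTheory
open scoped InnerProductSpace

section Aux

open scoped ENNReal Pointwise

/-- Hölder / Cauchy–Schwarz for the product of two `L²` functions. -/
lemma holder_mul_aux17 {α : Type*} [MeasurableSpace α] {μ : Measure α}
    {f g : α → ℂ} (hf : MemLp f 2 μ) (hg : MemLp g 2 μ) :
    Integrable (fun x => f x * g x) μ ∧
    ‖∫ x, f x * g x ∂μ‖ ≤ (eLpNorm f 2 μ).toReal * (eLpNorm g 2 μ).toReal := by
  have hconj : eLpNorm (fun x => (starRingEnd ℂ) (f x)) 2 μ = eLpNorm f 2 μ :=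
    eLpNorm_conj f 2 μ
  have hfc : MemLp (fun x => (starRingEnd ℂ) (f x)) 2 μ :=
    ⟨RCLike.continuous_conj.comp_aestronglyMeasurable hf.1, by rw [hconj]; exact hf.2⟩
  set F : Lp ℂ 2 μ := hfc.toLp _ with hF
  set Gp : Lp ℂ 2 μ := hg.toLp _ with hG
  have hae : (fun x => f x * g x) =ᵐ[μ] fun x => ⟪F x, Gp x⟫_ℂ := by
    filter_upwards [hfc.coeFn_toLp, hg.coeFn_toLp] with x h1 h2
    simp [h1, h2, RCLike.inner_apply]
    rw [hF, hG, h1, h2, RCLike.conj_conj, mul_comm]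
  have hint : Integrable (fun x => f x * g x) μ := (L2.integrable_inner F Gp).congr hae.symm
  refine ⟨hint, ?_⟩
  have heq : ∫ x, f x * g x ∂μ = ⟪F, Gp⟫_ℂ := by
    rw [integral_congr_ae hae, L2.inner_def]
  rw [heq]
  calc ‖⟪F, Gp⟫_ℂ‖ ≤ ‖F‖ * ‖Gp‖ := norm_inner_le_norm F Gp
    _ = (eLpNorm f 2 μ).toReal * (eLpNorm g 2 μ).toReal := by
        rw [hF, hG, Lp.norm_toLp, Lp.norm_toLp, hconj]

lemma memLp_conj_aux17 {α : Type*} [MeasurableSpace α] {μ : Measure α} {p : ℝ≥0∞}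
    {f : α → ℂ} (hf : MemLp f p μ) : MemLp (fun x => (starRingEnd ℂ) (f x)) p μ :=
  ⟨RCLike.continuous_conj.comp_aestronglyMeasurable hf.1, by
    have hc : eLpNorm (fun x => (starRingEnd ℂ) (f x)) p μ = eLpNorm f p μ := eLpNorm_conj f p μ
    rw [hc]; exact hf.2⟩

/-- A continuous, right-uniformly continuous function in `L²` of a Haar measure vanishes at
infinity. -/
lemma vanish_aux17 {G : Type*} [Group G] [TopologicalSpace G] [IsTopologicalGroup G]
    [LocallyCompactSpace G] [MeasurableSpace G] [BorelSpace G]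
    (μ : Measure G) [μ.IsHaarMeasure]
    {F : G → ℂ} (hFc : Continuous F) (hF2 : MemLp F 2 μ)
    (hruc : ∀ ε > (0:ℝ), ∃ V ∈ nhds (1:G), ∀ x : G, ∀ g ∈ V, ‖F (x*g) - F x‖ ≤ ε) :
    ∀ ε > (0:ℝ), ∃ K : Set G, IsCompact K ∧ ∀ x ∉ K, ‖F x‖ ≤ ε := by
  intro ε hε
  by_contra hcon
  push_neg at hcon
  obtain ⟨V, hVmem, hV⟩ := hruc (ε/2) (by positivity)
  obtain ⟨C, hCcomp, hCmem⟩ := exists_compact_mem_nhds (1 : G)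
  set O : Set G := interior V ∩ interior C with hO
  have hOopen : IsOpen O := isOpen_interior.inter isOpen_interior
  have h1O : (1:G) ∈ O := ⟨mem_interior_iff_mem_nhds.2 hVmem, mem_interior_iff_mem_nhds.2 hCmem⟩
  set D : Set G := C * C⁻¹ with hD
  have hDcomp : IsCompact D := hCcomp.mul hCcomp.inv
  set S : Set G := {x | ε < ‖F x‖} with hS
  have hdisj : ∀ z x : G, x ∉ z • D → Disjoint (x • O) (z • O) := by
    intro z x hx
    rw [Set.disjoint_left]
    rintro y hy1 hy2
    obtain ⟨a, ha, rfl⟩ := hy1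
    obtain ⟨b, hb, hab⟩ := hy2
    apply hx
    refine ⟨b * a⁻¹, Set.mul_mem_mul (interior_subset hb.2)
      (Set.inv_mem_inv.2 (interior_subset ha.2)), ?_⟩
    have hab' : z * b = x * a := hab
    show z * (b * a⁻¹) = x
    rw [← mul_assoc, hab']; group
  have hfam : ∀ n : ℕ, ∃ f : Fin n → G, (∀ i, f i ∈ S) ∧
      ∀ i j, i ≠ j → Disjoint (f i • O) (f j • O) := by
    intro n; induction n with
    | zero => exact ⟨fun i => i.elim0, fun i => i.elim0, fun i => i.elim0⟩
    | succ n ih =>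
      obtain ⟨f, hfS, hfd⟩ := ih
      obtain ⟨x, hxK, hxS⟩ := hcon (⋃ i, f i • D)
        (isCompact_iUnion fun i => hDcomp.smul _)
      have hxKi : ∀ i, x ∉ f i • D := fun i hi => hxK (Set.mem_iUnion.2 ⟨i, hi⟩)
      refine ⟨Fin.snoc f x, ?_, ?_⟩
      · intro i
        induction i using Fin.lastCases with
        | last => simpa [Fin.snoc_last, hS] using hxS
        | cast j => simpa [Fin.snoc_castSucc] using hfS j
      · intro i j hij
        induction i using Fin.lastCases with
        | last =>
          induction j using Fin.lastCases with
          | last => exact absurd rfl hij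
          | cast j' =>
            simpa [Fin.snoc_last, Fin.snoc_castSucc] using hdisj (f j') x (hxKi j')
        | cast i' =>
          induction j using Fin.lastCases with
          | last =>
            simpa [Fin.snoc_last, Fin.snoc_castSucc] using (hdisj (f i') x (hxKi i')).symm
          | cast j' =>
            simp only [Fin.snoc_castSucc]
            exact hfd i' j' (fun h => hij (congrArg Fin.castSucc h))
  set g : G → ℝ≥0∞ := fun z => (‖F z‖₊ : ℝ≥0∞) ^ (2:ℝ) with hg
  have hgmeas : Measurable g := (hFc.measurable.nnnorm.coe_nnreal_ennreal).pow_const _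
  set I : ℝ≥0∞ := ∫⁻ z, g z ∂μ with hI
  have hIlt : I < ⊤ := by
    have h2 := hF2.2
    rw [eLpNorm_eq_lintegral_rpow_enorm_toReal two_ne_zero ENNReal.ofNat_ne_top] at h2
    simp only [ENNReal.toReal_ofNat] at h2
    have := (ENNReal.rpow_lt_top_iff_of_pos (by norm_num : (0:ℝ) < 1/2)).1 h2
    simpa [hI, hg, enorm_eq_nnnorm] using this
  set c0 : ℝ≥0∞ := ENNReal.ofReal (ε/2) ^ (2:ℝ) with hc0
  have hlow : ∀ x ∈ S, c0 * μ O ≤ ∫⁻ z in x • O, g z ∂μ := by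
    intro x hx
    have : ∀ z ∈ x • O, c0 ≤ g z := by
      rintro z ⟨a, ha, rfl⟩
      have hdiff : ‖F (x * a) - F x‖ ≤ ε/2 := hV x a (interior_subset ha.1)
      have hFz : ε/2 ≤ ‖F (x * a)‖ := by
        have h1 : ε < ‖F x‖ := hx
        have := norm_sub_norm_le (F x) (F (x*a))
        have h2 : ‖F x - F (x*a)‖ ≤ ε/2 := by rwa [norm_sub_rev]
        linarith
      rw [hc0, hg]
      refine ENNReal.rpow_le_rpow ?_ (by norm_num)
      rw [← enorm_eq_nnnorm, ← ofReal_norm_eq_enorm]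
      exact ENNReal.ofReal_le_ofReal hFz
    calc c0 * μ O = c0 * μ (x • O) := by rw [measure_smul]
      _ = ∫⁻ _ in x • O, c0 ∂μ := by rw [setLIntegral_const]
      _ ≤ ∫⁻ z in x • O, g z ∂μ := setLIntegral_mono hgmeas this
  have hkey : ∀ n : ℕ, (n : ℝ≥0∞) * (c0 * μ O) ≤ I := by
    intro n
    obtain ⟨f, hfS, hfd⟩ := hfam n
    have hmeas : ∀ i ∈ Finset.univ, MeasurableSet (f i • O) :=
      fun i _ => (hOopen.smul (f i)).measurableSet
    have hpd : Set.PairwiseDisjoint (↑(Finset.univ : Finset (Fin n))) (fun i => f i • O) :=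
      fun i _ j _ hij => hfd i j hij
    calc (n : ℝ≥0∞) * (c0 * μ O) = ∑ _i : Fin n, c0 * μ O := by
          simp [Finset.sum_const, nsmul_eq_mul]
      _ ≤ ∑ i : Fin n, ∫⁻ z in f i • O, g z ∂μ :=
          Finset.sum_le_sum fun i _ => hlow (f i) (hfS i)
      _ = ∫⁻ z in ⋃ i ∈ Finset.univ, f i • O, g z ∂μ :=
          (lintegral_biUnion_finset hpd hmeas g).symm
      _ ≤ I := by rw [hI]; exact setLIntegral_le_lintegral _ _
  have hc0pos : 0 < c0 * μ O := by
    apply ENNReal.mul_pos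
    · exact (ENNReal.rpow_pos (ENNReal.ofReal_pos.2 (by positivity)) (by simp)).ne'
    · exact (hOopen.measure_pos μ ⟨1, h1O⟩).ne'
  have hc0top : c0 * μ O ≠ ⊤ := by
    apply ENNReal.mul_ne_top
    · exact (ENNReal.rpow_lt_top_of_nonneg (by norm_num) ENNReal.ofReal_ne_top).ne
    · exact ((measure_mono (Set.inter_subset_right.trans interior_subset)).trans_lt
        hCcomp.measure_lt_top).ne
  obtain ⟨n, hn⟩ := ENNReal.exists_nat_gt (ENNReal.div_lt_top hIlt.ne hc0pos.ne').ne
  have := (ENNReal.le_div_iff_mul_le (Or.inl hc0pos.ne') (Or.inl hc0top)).2 (hkey n)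
  exact absurd hn (not_lt.2 this)

end Aux

/-- Let `ξ, η` be `U`-bounded vectors with constants `k_ξ, k_η`, and let
`φ ∈ L²(G)`. Then (i) for every `x` the function `y ↦ φ(y) c_{ξη}(y⁻¹x)` is integrable and
`|(φ ⋆ c_{ξη})(x)| ≤ ‖φ‖₂ ‖c_{ηξ}‖₂`; (ii) `φ ⋆ c_{ξη}` is continuous and vanishes at
infinity; (iii) `φ ⋆ c_{ξη} ∈ L²(G)` with `‖φ ⋆ c_{ξη}‖₂ ≤ k_ξ k_η ‖φ‖₂`. -/
theorem stmt17
    {G : Type*} [Group G] [TopologicalSpace G] [IsTopologicalGroup G]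
    [LocallyCompactSpace G] [MeasurableSpace G] [BorelSpace G]
    (μ : Measure G) [μ.IsHaarMeasure]
    {H : Type*} [NormedAddCommGroup H] [InnerProductSpace ℂ H] [CompleteSpace H]
    (U : G →* (H ≃ₗᵢ[ℂ] H)) (hU : ∀ ξ : H, Continuous fun x => U x ξ)
    (ξ : H) (kξ : ℝ)
    (hξ : ∀ η : H,
      MemLp (fun x => ⟪U x ξ, η⟫_ℂ) 2 μ ∧
      eLpNorm (fun x => ⟪U x ξ, η⟫_ℂ) 2 μ ≤ ENNReal.ofReal (kξ * ‖η‖))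
    (η : H) (kη : ℝ)
    (hη : ∀ ζ : H,
      MemLp (fun x => ⟪U x η, ζ⟫_ℂ) 2 μ ∧
      eLpNorm (fun x => ⟪U x η, ζ⟫_ℂ) 2 μ ≤ ENNReal.ofReal (kη * ‖ζ‖))
    (φ : G → ℂ) (hφ : MemLp φ 2 μ) :
    ((∀ x : G, Integrable (fun y => φ y * ⟪U (y⁻¹ * x) ξ, η⟫_ℂ) μ) ∧
      ∀ x : G, ‖∫ y, φ y * ⟪U (y⁻¹ * x) ξ, η⟫_ℂ ∂μ‖ ≤
        (eLpNorm φ 2 μ).toReal * (eLpNorm (fun x => ⟪U x η, ξ⟫_ℂ) 2 μ).toReal) ∧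
    (Continuous (fun x : G => ∫ y, φ y * ⟪U (y⁻¹ * x) ξ, η⟫_ℂ ∂μ) ∧
      ∀ ε > (0 : ℝ), ∃ K : Set G, IsCompact K ∧
        ∀ x ∉ K, ‖∫ y, φ y * ⟪U (y⁻¹ * x) ξ, η⟫_ℂ ∂μ‖ ≤ ε) ∧
    (MemLp (fun x : G => ∫ y, φ y * ⟪U (y⁻¹ * x) ξ, η⟫_ℂ ∂μ) 2 μ ∧
      eLpNorm (fun x : G => ∫ y, φ y * ⟪U (y⁻¹ * x) ξ, η⟫_ℂ ∂μ) 2 μ ≤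
        ENNReal.ofReal (kξ * kη * (eLpNorm φ 2 μ).toReal)) := by
  have h2 : ∀ (e : H ≃ₗᵢ[ℂ] H) (w b : H), ⟪e.symm w, b⟫_ℂ = ⟪w, e b⟫_ℂ := by
    intro e w b
    rw [LinearIsometryEquiv.inner_map_eq_flip]
    simp
  have happ : ∀ (x y : G) (w : H), U (y⁻¹ * x) w = (U y).symm (U x w) := by
    intro x y w
    rw [map_mul, map_inv]
    rfl
  have key : ∀ x y : G, ⟪U (y⁻¹ * x) ξ, η⟫_ℂ = (starRingEnd ℂ) ⟪U y η, U x ξ⟫_ℂ := by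
    intro x y
    rw [happ x y, h2, ← inner_conj_symm]
  have hconjmem : ∀ ζ : H, MemLp (fun y => (starRingEnd ℂ) ⟪U y η, ζ⟫_ℂ) 2 μ :=
    fun ζ => memLp_conj_aux17 (hη ζ).1
  -- part (i): integrability
  have hInt1 : ∀ x : G, Integrable (fun y => φ y * ⟪U (y⁻¹ * x) ξ, η⟫_ℂ) μ := by
    intro x
    have := (holder_mul_aux17 hφ (hconjmem (U x ξ))).1
    refine this.congr (ae_of_all _ fun y => ?_)
    simp only [key]
  -- part (i): bound
  have htrans : ∀ x : G, eLpNorm (fun y => ⟪U y η, U x ξ⟫_ℂ) 2 μ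
      = eLpNorm (fun y => ⟪U y η, ξ⟫_ℂ) 2 μ := by
    intro x
    have hfun : (fun y => ⟪U y η, U x ξ⟫_ℂ) = (fun y => ⟪U y η, ξ⟫_ℂ) ∘ (fun y => x⁻¹ * y) := by
      funext y
      simp only [Function.comp_apply]
      rw [happ y x, h2]
    rw [hfun, eLpNorm_comp_measurePreserving ((hη ξ).1).1 (measurePreserving_mul_left μ x⁻¹)]
  have hbound1 : ∀ x : G, ‖∫ y, φ y * ⟪U (y⁻¹ * x) ξ, η⟫_ℂ ∂μ‖ ≤
      (eLpNorm φ 2 μ).toReal * (eLpNorm (fun x => ⟪U x η, ξ⟫_ℂ) 2 μ).toReal := by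
    intro x
    have hre : ∫ y, φ y * ⟪U (y⁻¹ * x) ξ, η⟫_ℂ ∂μ
        = ∫ y, φ y * (starRingEnd ℂ) ⟪U y η, U x ξ⟫_ℂ ∂μ := by
      refine integral_congr_ae (ae_of_all _ fun y => ?_)
      simp only [key]
    rw [hre]
    refine le_trans (holder_mul_aux17 hφ (hconjmem (U x ξ))).2 ?_
    have hc : eLpNorm (fun y => (starRingEnd ℂ) ⟪U y η, U x ξ⟫_ℂ) 2 μ
        = eLpNorm (fun y => ⟪U y η, U x ξ⟫_ℂ) 2 μ := eLpNorm_conj _ 2 μ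
    rw [hc, htrans x]
  -- construction of the representing vector `v`
  have hφc : MemLp (fun y => (starRingEnd ℂ) (φ y)) 2 μ := memLp_conj_aux17 hφ
  have hInt2 : ∀ ζ : H, Integrable (fun y => (starRingEnd ℂ) (φ y) * ⟪U y η, ζ⟫_ℂ) μ :=
    fun ζ => (holder_mul_aux17 hφc (hη ζ).1).1
  set t : ℝ := (eLpNorm φ 2 μ).toReal with ht
  have ht0 : 0 ≤ t := ENNReal.toReal_nonneg
  set lm : H →ₗ[ℂ] ℂ :=
    { toFun := fun ζ => ∫ y, (starRingEnd ℂ) (φ y) * ⟪U y η, ζ⟫_ℂ ∂μ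
      map_add' := by
        intro a b
        simp only [inner_add_right, mul_add]
        exact integral_add (hInt2 a) (hInt2 b)
      map_smul' := by
        intro c a
        simp only [inner_smul_right, RingHom.id_apply, smul_eq_mul]
        rw [← integral_const_mul]
        congr 1; funext y; ring } with hlm
  have hlmbound : ∀ ζ : H, ‖lm ζ‖ ≤ (max kη 0 * t) * ‖ζ‖ := by
    intro ζ
    have h1 := (holder_mul_aux17 hφc (hη ζ).1).2
    have hc : eLpNorm (fun y => (starRingEnd ℂ) (φ y)) 2 μ = eLpNorm φ 2 μ := eLpNorm_conj φ 2 μ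
    rw [hc] at h1
    have h3 : (eLpNorm (fun y => ⟪U y η, ζ⟫_ℂ) 2 μ).toReal ≤ max kη 0 * ‖ζ‖ := by
      refine ENNReal.toReal_le_of_le_ofReal (by positivity) ?_
      refine le_trans (hη ζ).2 (ENNReal.ofReal_le_ofReal ?_)
      exact mul_le_mul_of_nonneg_right (le_max_left _ _) (norm_nonneg ζ)
    calc ‖lm ζ‖ ≤ t * (eLpNorm (fun y => ⟪U y η, ζ⟫_ℂ) 2 μ).toReal := h1
      _ ≤ t * (max kη 0 * ‖ζ‖) := mul_le_mul_of_nonneg_left h3 ht0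
      _ = (max kη 0 * t) * ‖ζ‖ := by ring
  set L : H →L[ℂ] ℂ := LinearMap.mkContinuous lm (max kη 0 * t) hlmbound with hL
  set v : H := (InnerProductSpace.toDual ℂ H).symm L with hv
  have hvinner : ∀ ζ : H, ⟪v, ζ⟫_ℂ = ∫ y, (starRingEnd ℂ) (φ y) * ⟪U y η, ζ⟫_ℂ ∂μ := by
    intro ζ
    rw [hv, InnerProductSpace.toDual_symm_apply]
    rfl
  have hvnorm : ‖v‖ ≤ max kη 0 * t := by
    have h1 : ‖L‖ ≤ max kη 0 * t :=
      LinearMap.mkContinuous_norm_le lm (mul_nonneg (le_max_right _ _) ht0) hlmbound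
    rw [hv]
    calc ‖(InnerProductSpace.toDual ℂ H).symm L‖ = ‖L‖ :=
          LinearIsometryEquiv.norm_map _ L
      _ ≤ _ := h1
  have Feq : ∀ x : G, ∫ y, φ y * ⟪U (y⁻¹ * x) ξ, η⟫_ℂ ∂μ = ⟪U x ξ, v⟫_ℂ := by
    intro x
    have h1 : ∫ y, φ y * ⟪U (y⁻¹ * x) ξ, η⟫_ℂ ∂μ
        = ∫ y, (starRingEnd ℂ) ((starRingEnd ℂ) (φ y) * ⟪U y η, U x ξ⟫_ℂ) ∂μ := by
      refine integral_congr_ae (ae_of_all _ fun y => ?_)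
      simp only [key]
      rw [map_mul, RCLike.conj_conj]
    rw [h1, integral_conj, ← hvinner (U x ξ), inner_conj_symm]
  have hfun : (fun x : G => ∫ y, φ y * ⟪U (y⁻¹ * x) ξ, η⟫_ℂ ∂μ) = fun x => ⟪U x ξ, v⟫_ℂ :=
    funext Feq
  have hFc : Continuous (fun x : G => ⟪U x ξ, v⟫_ℂ) := (hU ξ).inner continuous_const
  have hF2 : MemLp (fun x : G => ⟪U x ξ, v⟫_ℂ) 2 μ := (hξ v).1
  have hruc : ∀ ε > (0:ℝ), ∃ V ∈ nhds (1:G), ∀ x : G, ∀ g ∈ V,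
      ‖⟪U (x*g) ξ, v⟫_ℂ - ⟪U x ξ, v⟫_ℂ‖ ≤ ε := by
    intro ε hε
    have hcont : Continuous fun g : G => ‖U g ξ - ξ‖ * ‖v‖ :=
      (((hU ξ).sub continuous_const).norm).mul continuous_const
    refine ⟨{g | ‖U g ξ - ξ‖ * ‖v‖ < ε}, ?_, ?_⟩
    · refine IsOpen.mem_nhds (isOpen_lt hcont continuous_const) ?_
      simpa using hε
    · intro x g hg
      have happ2 : U (x*g) ξ = U x (U g ξ) := by rw [map_mul]; rfl
      have hsub : U (x*g) ξ - U x ξ = U x (U g ξ - ξ) := by rw [happ2, map_sub]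
      calc ‖⟪U (x*g) ξ, v⟫_ℂ - ⟪U x ξ, v⟫_ℂ‖ = ‖⟪U (x*g) ξ - U x ξ, v⟫_ℂ‖ := by
            rw [← inner_sub_left]
        _ ≤ ‖U (x*g) ξ - U x ξ‖ * ‖v‖ := norm_inner_le_norm _ _
        _ = ‖U g ξ - ξ‖ * ‖v‖ := by rw [hsub, (U x).norm_map]
        _ ≤ ε := le_of_lt hg
  refine ⟨⟨hInt1, hbound1⟩, ⟨?_, ?_⟩, ?_, ?_⟩
  · rw [hfun]; exact hFc
  · intro ε hε
    obtain ⟨K, hK, hKb⟩ := vanish_aux17 μ hFc hF2 hruc ε hε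
    exact ⟨K, hK, fun x hx => by rw [Feq x]; exact hKb x hx⟩
  · rw [hfun]; exact hF2
  · rw [hfun]
    refine le_trans (hξ v).2 ?_
    rcases le_or_gt 0 kξ with hkξ | hkξ
    · rcases le_or_gt 0 kη with hkη | hkη
      · refine ENNReal.ofReal_le_ofReal ?_
        have hvle : ‖v‖ ≤ kη * t := by rwa [max_eq_left hkη] at hvnorm
        calc kξ * ‖v‖ ≤ kξ * (kη * t) := mul_le_mul_of_nonneg_left hvle hkξ
          _ = kξ * kη * t := (mul_assoc _ _ _).symm
      · have hv0 : ‖v‖ = 0 :=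
          le_antisymm (by rwa [max_eq_right hkη.le, zero_mul] at hvnorm) (norm_nonneg v)
        rw [hv0, mul_zero]
        simp
    · have h0 : kξ * ‖v‖ ≤ 0 := mul_nonpos_iff.2 (Or.inr ⟨hkξ.le, norm_nonneg v⟩)
      rw [ENNReal.ofReal_eq_zero.2 h0]
      exact zero_le'
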